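/- On the path L^n with exactly one node i of threshold 2 (all other thresholds 1), the singleton {i} is an optimal TWC target set for every time-window size λ ≥ 1. -/

import Mathlib

set_option linter.unusedVariables false

open Finset

variable {V : Type*} [Fintype V] [DecidableEq V]

/-- `influenced G t lam S r` : set of influenced nodes after round `r`. -/
def influenced (G : SimpleGraph V) [DecidableRel G.Adj] (t : V → ℕ) (lam : ℕ)
    (S : Finset V) : ℕ → Finset V
  | 0 => S
  | r + 1 =>
    let prev := influenced G t lam S r
    let A := if r + 1 ≤ lam then prev else prev \ influenced G t lam S (r - lam)
    prev ∪ Finset.univ.filter fun v => t v ≤ (G.neighborFinset v ∩ A).card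
  termination_by r => r
  decreasing_by all_goals omega

/-- `activeSet G t lam S r` : set of active nodes at round `r`. -/
def activeSet (G : SimpleGraph V) [DecidableRel G.Adj] (t : V → ℕ) (lam : ℕ)
    (S : Finset V) (r : ℕ) : Finset V :=
  if r = 0 then ∅
  else if r ≤ lam then influenced G t lam S (r - 1)
  else influenced G t lam S (r - 1) \ influenced G t lam S (r - 1 - lam)

def isTargetSet (G : SimpleGraph V) [DecidableRel G.Adj] (t : V → ℕ) (lam : ℕ)
    (S : Finset V) : Prop :=
  ∃ r, influenced G t lam S r = Finset.univ

def pathGraph (n : ℕ) : SimpleGraph (Fin n) where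
  Adj i j := i.val + 1 = j.val ∨ j.val + 1 = i.val
  symm := ⟨fun i j h => h.symm⟩
  loopless := ⟨fun i h => by rcases h with h | h <;> omega⟩

instance (n : ℕ) : DecidableRel (pathGraph n).Adj :=
  fun i j => inferInstanceAs (Decidable (i.val + 1 = j.val ∨ j.val + 1 = i.val))

def ringGraph (n : ℕ) : SimpleGraph (Fin n) where
  Adj i j := i ≠ j ∧ ((i.val + 1) % n = j.val ∨ (j.val + 1) % n = i.val)
  symm := ⟨fun i j h => ⟨h.1.symm, h.2.symm⟩⟩
  loopless := ⟨fun i h => h.1 rfl⟩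

instance (n : ℕ) : DecidableRel (ringGraph n).Adj :=
  fun i j => inferInstanceAs (Decidable (_ ∧ (_ ∨ _)))

instance : DecidableRel (⊤ : SimpleGraph V).Adj :=
  fun a b => inferInstanceAs (Decidable (a ≠ b))



lemma influenced_empty (G : SimpleGraph V) [DecidableRel G.Adj] (t : V → ℕ) (lam : ℕ)
    (ht : ∀ v, 1 ≤ t v) (r : ℕ) : influenced G t lam ∅ r = ∅ := by
  induction r using Nat.strong_induction_on with
  | _ r ih =>
    match r with
    | 0 => rw [influenced]
    | r + 1 =>
      rw [influenced]
      simp only [ih r (by omega), ih (r - lam) (by omega)]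
      have hA : (if r + 1 ≤ lam then (∅ : Finset V) else ∅ \ ∅) = ∅ := by
        split_ifs <;> simp
      rw [hA]
      simp only [Finset.inter_empty, Finset.card_empty, Finset.empty_union,
        Finset.filter_eq_empty_iff]
      intro v _
      have := ht v
      omega

lemma influenced_ball (n lam : ℕ) (hn : 2 ≤ n) (hlam : 1 ≤ lam) (t : Fin n → ℕ)
    (i : Fin n) (hti : 1 ≤ t i) (ht1 : ∀ v : Fin n, v ≠ i → t v = 1) (r : ℕ) :
    influenced (pathGraph n) t lam {i} r
      = univ.filter (fun v => v.val - i.val ≤ r ∧ i.val - v.val ≤ r) := by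
  induction r using Nat.strong_induction_on with
  | _ r ih =>
    match r with
    | 0 =>
      rw [influenced]
      ext v
      simp only [mem_singleton, mem_filter, mem_univ, true_and, Fin.ext_iff]
      omega
    | r + 1 =>
      rw [influenced]
      simp only [ih r (by omega), ih (r - lam) (by omega)]
      ext v
      simp only [mem_union, mem_filter, mem_univ, true_and]
      constructor
      · rintro (h | h)
        · omega
        · have h1 : 1 ≤ t v := by
            rcases eq_or_ne v i with rfl | hv
            · exact hti
            · rw [ht1 v hv]
          obtain ⟨u, hu⟩ := Finset.card_pos.mp (h1.trans h)
          rw [mem_inter, SimpleGraph.mem_neighborFinset] at hu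
          have hadj : v.val + 1 = u.val ∨ u.val + 1 = v.val := hu.1
          have hu2 : u.val - i.val ≤ r ∧ i.val - u.val ≤ r := by
            rcases hu with ⟨-, hu⟩
            split_ifs at hu with hc
            · exact (mem_filter.mp hu).2
            · exact (mem_filter.mp (mem_sdiff.mp hu).1).2
          omega
      · intro hv
        by_cases hr : v.val - i.val ≤ r ∧ i.val - v.val ≤ r
        · left; exact hr
        · right
          have hvi : v ≠ i := by
            intro h; subst h; simp at hr
          rw [ht1 v hvi]
          have hd : v.val = i.val + (r + 1) ∨ i.val = v.val + (r + 1) := by omega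
          have hvlt := v.isLt
          have hilt := i.isLt
          obtain ⟨u, hadj, hdu1, hdu2, hdu3⟩ : ∃ u : Fin n, ((pathGraph n).Adj v u) ∧
              u.val - i.val ≤ r ∧ i.val - u.val ≤ r ∧
              (¬ r + 1 ≤ lam → ¬(u.val - i.val ≤ r - lam ∧ i.val - u.val ≤ r - lam)) := by
            rcases hd with hd | hd
            · refine ⟨⟨i.val + r, by omega⟩, ?_, by simp <;> omega, by simp <;> omega,
                fun hc => by simp <;> omega⟩
              show _ ∨ _
              right; simp; omega
            · refine ⟨⟨i.val - r, by omega⟩, ?_, by simp <;> omega, by simp <;> omega,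
                fun hc => by simp <;> omega⟩
              show _ ∨ _
              left; simp; omega
          refine Finset.card_pos.mpr ⟨u, ?_⟩
          rw [mem_inter, SimpleGraph.mem_neighborFinset]
          refine ⟨hadj, ?_⟩
          split_ifs with hc
          · simp only [mem_filter, mem_univ, true_and]; exact ⟨hdu1, hdu2⟩
          · rw [mem_sdiff]
            refine ⟨by simp only [mem_filter, mem_univ, true_and]; exact ⟨hdu1, hdu2⟩, ?_⟩
            simp only [mem_filter, mem_univ, true_and]
            exact hdu3 hc

/-- on a path with exactly one node `i` of threshold 2 (all other
thresholds 1, endpoints having threshold 1), the singleton `{i}` is an optimal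
TWC target set for every window size `λ ≥ 1`. -/
theorem stmt5 (n lam : ℕ) (hn : 2 ≤ n) (hlam : 1 ≤ lam) (t : Fin n → ℕ)
    (htv : ∀ v, t v = 1 ∨ t v = 2)
    (h0 : t ⟨0, by omega⟩ = 1) (hlast : t ⟨n - 1, by omega⟩ = 1)
    (i : Fin n) (hi : t i = 2) (huniq : ∀ v, t v = 2 → v = i) :
    isTargetSet (pathGraph n) t lam {i} ∧
    ∀ S : Finset (Fin n), isTargetSet (pathGraph n) t lam S →
      ({i} : Finset (Fin n)).card ≤ S.card := by
  have hti : 1 ≤ t i := by omega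
  have ht1 : ∀ v : Fin n, v ≠ i → t v = 1 := by
    intro v hv
    rcases htv v with h | h
    · exact h
    · exact absurd (huniq v h) hv
  constructor
  · refine ⟨n, ?_⟩
    rw [influenced_ball n lam hn hlam t i hti ht1 n]
    ext v
    have h1 := v.isLt
    have h2 := i.isLt
    simp only [mem_filter, mem_univ, true_and, iff_true]
    omega
  · intro S hS
    rw [Finset.card_singleton]
    rcases S.eq_empty_or_nonempty with rfl | hne
    · exfalso
      obtain ⟨r, hr⟩ := hS
      rw [influenced_empty _ _ _ (fun v => by rcases htv v with h | h <;> omega) r] at hr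
      have : (⟨0, by omega⟩ : Fin n) ∈ (∅ : Finset (Fin n)) := by
        rw [hr]; exact mem_univ _
      simp at this
    · exact Finset.one_le_card.mpr hne
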